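/- Fix an integer L ≥ 1 and a real P > 0, and let F(x) = 1 − e^{−Lx} Σ_{k=0}^{L−1} (Lx)^k / k! with density f(x) = L e^{−Lx} (Lx)^{L−1}/(L−1)! for x ≥ 0. Then the total throughput of the worst-user scheduler with L transmit antennas, R_tot(N) = N ∫_0^∞ log(1+Px) · N (1−F(x))^{N−1} f(x) dx, satisfies R_tot(N) = Θ(N^{(L−1)/L}): there exist constants 0 < c₁ ≤ c₂ and N₀ such that c₁ N^{(L−1)/L} ≤ R_tot(N) ≤ c₂ N^{(L−1)/L} for all N ≥ N₀. -/

import Mathlib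

open Real Set Finset
open MeasureTheory Filter Topology
set_option maxHeartbeats 1000000

namespace WorstUser

noncomputable def g (a : ℝ) (n : ℕ) (x : ℝ) : ℝ :=
  Real.exp (-a * x) * ∑ k ∈ Finset.range n, (a * x) ^ k / (Nat.factorial k : ℝ)

noncomputable def f (a : ℝ) (n : ℕ) (x : ℝ) : ℝ :=
  a * Real.exp (-a * x) * (a * x) ^ (n - 1) / (Nat.factorial (n - 1) : ℝ)

lemma hasDerivAt_exp_neg (a x : ℝ) :
    HasDerivAt (fun y => Real.exp (-a * y)) (-a * Real.exp (-a * x)) x := by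
  have h1 : HasDerivAt (fun y : ℝ => -a * y) (-a) x := by
    simpa using (hasDerivAt_id x).const_mul (-a)
  simpa [Function.comp_def, mul_comm] using (Real.hasDerivAt_exp (-a * x)).comp x h1

lemma hasDerivAt_g (a : ℝ) (m : ℕ) (x : ℝ) :
    HasDerivAt (g a (m + 1))
      (-(a * Real.exp (-a * x) * (a * x) ^ m / (Nat.factorial m : ℝ))) x := by
  induction m with
  | zero =>
      have : HasDerivAt (fun y => Real.exp (-a * y)) (-a * Real.exp (-a * x)) x :=
        hasDerivAt_exp_neg a x
      have h2 : HasDerivAt (g a 1) (-a * Real.exp (-a * x)) x := by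
        convert this using 2 with y
        simp [g]
      convert h2 using 1
      simp
  | succ m ih =>
      have hpow : HasDerivAt (fun y : ℝ => (a * y) ^ (m + 1))
          ((m + 1 : ℕ) * (a * x) ^ m * a) x := by
        have h1 : HasDerivAt (fun y : ℝ => a * y) a x := by
          simpa using (hasDerivAt_id x).const_mul a
        simpa [Function.comp_def] using (hasDerivAt_pow (m + 1) (a * x)).comp x h1
      have hterm : HasDerivAt
          (fun y => Real.exp (-a * y) * ((a * y) ^ (m + 1) / (Nat.factorial (m + 1) : ℝ)))
          ((-a * Real.exp (-a * x)) * ((a * x) ^ (m + 1) / (Nat.factorial (m + 1) : ℝ)) +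
            Real.exp (-a * x) * ((m + 1 : ℕ) * (a * x) ^ m * a / (Nat.factorial (m + 1) : ℝ))) x :=
        (hasDerivAt_exp_neg a x).mul (hpow.div_const _)
      have hsum := ih.add hterm
      have hfun : g a (m + 2) = (fun y => g a (m + 1) y +
          Real.exp (-a * y) * ((a * y) ^ (m + 1) / (Nat.factorial (m + 1) : ℝ))) := by
        funext y
        simp [g, Finset.sum_range_succ, mul_add]
      rw [show m + 1 + 1 = m + 2 from rfl, hfun]
      refine hsum.congr_deriv ?_
      have hm : (Nat.factorial (m + 1) : ℝ) = (m + 1) * (Nat.factorial m : ℝ) := by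
        rw [Nat.factorial_succ]; push_cast; ring
      have h0 : (Nat.factorial m : ℝ) ≠ 0 := Nat.cast_ne_zero.mpr (Nat.factorial_ne_zero m)
      have h1 : (m + 1 : ℝ) ≠ 0 := by positivity
      rw [hm]
      field_simp
      push_cast
      ring

lemma pow_div_factorial_le_exp {t : ℝ} (ht : 0 ≤ t) (k : ℕ) :
    t ^ k / (Nat.factorial k : ℝ) ≤ Real.exp t := by
  calc t ^ k / (Nat.factorial k : ℝ)
      ≤ ∑ i ∈ Finset.range (k + 1), t ^ i / (Nat.factorial i : ℝ) := by
        apply Finset.single_le_sum (f := fun i => t ^ i / (Nat.factorial i : ℝ))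
          (fun i _ => by positivity) (Finset.self_mem_range_succ k)
    _ ≤ Real.exp t := Real.sum_le_exp_of_nonneg ht _

lemma g_nonneg {a : ℝ} (ha : 0 ≤ a) (n : ℕ) {x : ℝ} (hx : 0 ≤ x) : 0 ≤ g a n x := by
  unfold g; positivity

lemma f_nonneg {a : ℝ} (ha : 0 ≤ a) (n : ℕ) {x : ℝ} (hx : 0 ≤ x) : 0 ≤ f a n x := by
  unfold f; positivity

lemma sum_aux_le {a : ℝ} (ha : 0 ≤ a) (n : ℕ) {x : ℝ} (hx : 0 ≤ x) :
    Real.exp (-a * x) * ∑ k ∈ Finset.range n, (a * x) ^ k / (Nat.factorial k : ℝ) ≤ 1 := by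
  have h := Real.sum_le_exp_of_nonneg (mul_nonneg ha hx) n
  calc Real.exp (-a * x) * ∑ k ∈ Finset.range n, (a * x) ^ k / (Nat.factorial k : ℝ)
      ≤ Real.exp (-a * x) * Real.exp (a * x) :=
        mul_le_mul_of_nonneg_left h (Real.exp_nonneg _)
    _ = 1 := by rw [← Real.exp_add]; simp

lemma g_le_one {a : ℝ} (ha : 0 ≤ a) (n : ℕ) {x : ℝ} (hx : 0 ≤ x) : g a n x ≤ 1 :=
  sum_aux_le ha n hx

lemma one_sub_g_ge {a : ℝ} (ha : 0 ≤ a) (n : ℕ) {x : ℝ} (hx : 0 ≤ x) :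
    Real.exp (-a * x) * (a * x) ^ n / (Nat.factorial n : ℝ) ≤ 1 - g a n x := by
  have h := sum_aux_le ha (n + 1) hx
  rw [Finset.sum_range_succ, mul_add] at h
  unfold g
  have : Real.exp (-a * x) * ((a * x) ^ n / (Nat.factorial n : ℝ))
      = Real.exp (-a * x) * (a * x) ^ n / (Nat.factorial n : ℝ) := by ring
  linarith [this ▸ h]

lemma g_zero {a : ℝ} (m : ℕ) : g a (m + 1) 0 = 1 := by
  unfold g
  rw [Finset.sum_eq_single 0]
  · simp
  · intro k _ hk
    simp [zero_pow hk]
  · simp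

lemma term_le {a : ℝ} (ha : 0 ≤ a) (k : ℕ) {x : ℝ} (hx : 0 ≤ x) :
    (a * x) ^ k / (Nat.factorial k : ℝ) ≤ 2 ^ k * Real.exp (a * x / 2) := by
  have h := pow_div_factorial_le_exp (t := a * x / 2) (by positivity) k
  have h2 : (a * x) ^ k = 2 ^ k * (a * x / 2) ^ k := by
    rw [← mul_pow]; ring_nf
  rw [h2]
  calc 2 ^ k * (a * x / 2) ^ k / (Nat.factorial k : ℝ)
      = 2 ^ k * ((a * x / 2) ^ k / (Nat.factorial k : ℝ)) := by ring
    _ ≤ 2 ^ k * Real.exp (a * x / 2) := by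
        apply mul_le_mul_of_nonneg_left h (by positivity)

lemma g_le_exp {a : ℝ} (ha : 0 ≤ a) (n : ℕ) {x : ℝ} (hx : 0 ≤ x) :
    g a n x ≤ 2 ^ n * Real.exp (-(a / 2) * x) := by
  have hsum : ∑ k ∈ Finset.range n, (a * x) ^ k / (Nat.factorial k : ℝ)
      ≤ 2 ^ n * Real.exp (a * x / 2) := by
    calc ∑ k ∈ Finset.range n, (a * x) ^ k / (Nat.factorial k : ℝ)
        ≤ ∑ k ∈ Finset.range n, 2 ^ k * Real.exp (a * x / 2) :=
          Finset.sum_le_sum fun k _ => term_le ha k hx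
      _ = (∑ k ∈ Finset.range n, (2:ℝ) ^ k) * Real.exp (a * x / 2) := by
          rw [Finset.sum_mul]
      _ ≤ 2 ^ n * Real.exp (a * x / 2) := by
          apply mul_le_mul_of_nonneg_right _ (Real.exp_nonneg _)
          rw [geom_sum_eq (by norm_num : (2:ℝ) ≠ 1)]
          norm_num
  calc g a n x ≤ Real.exp (-a * x) * (2 ^ n * Real.exp (a * x / 2)) :=
        mul_le_mul_of_nonneg_left hsum (Real.exp_nonneg _)
    _ = 2 ^ n * Real.exp (-(a / 2) * x) := by
        rw [show -(a / 2) * x = -a * x + a * x / 2 by ring, Real.exp_add]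
        ring
  
lemma f_le_exp {a : ℝ} (ha : 0 ≤ a) (n : ℕ) {x : ℝ} (hx : 0 ≤ x) :
    f a n x ≤ a * 2 ^ n * Real.exp (-(a / 2) * x) := by
  have h := term_le ha (n - 1) hx
  calc f a n x = a * (Real.exp (-a * x) * ((a * x) ^ (n-1) / (Nat.factorial (n-1) : ℝ))) := by
        unfold f; ring
    _ ≤ a * (Real.exp (-a * x) * (2 ^ (n-1) * Real.exp (a * x / 2))) := by
        apply mul_le_mul_of_nonneg_left _ ha
        exact mul_le_mul_of_nonneg_left h (Real.exp_nonneg _)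
    _ = a * 2 ^ (n-1) * Real.exp (-(a/2) * x) := by
        rw [show -(a / 2) * x = -a * x + a * x / 2 by ring, Real.exp_add]
        ring
    _ ≤ a * 2 ^ n * Real.exp (-(a/2) * x) := by
        have : (2:ℝ) ^ (n-1) ≤ 2 ^ n := pow_le_pow_right₀ (by norm_num) (Nat.sub_le n 1)
        have he := Real.exp_nonneg (-(a/2) * x)
        exact mul_le_mul_of_nonneg_right (mul_le_mul_of_nonneg_left this ha) he

lemma hasDerivAt_g' (a : ℝ) (m : ℕ) (x : ℝ) :
    HasDerivAt (g a (m + 1)) (-(f a (m + 1) x)) x := by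
  have := hasDerivAt_g a m x
  simpa [f] using this

lemma g_antitoneOn {a : ℝ} (ha : 0 ≤ a) (m : ℕ) : AntitoneOn (g a (m + 1)) (Ici 0) := by
  apply antitoneOn_of_deriv_nonpos (convex_Ici 0)
  · exact fun x _ => (hasDerivAt_g' a m x).continuousAt.continuousWithinAt
  · intro x _
    exact (hasDerivAt_g' a m x).differentiableAt.differentiableWithinAt
  · intro x hx
    rw [interior_Ici] at hx
    rw [(hasDerivAt_g' a m x).deriv]
    simpa using f_nonneg ha (m+1) (le_of_lt hx)

lemma one_sub_g_le {a : ℝ} (ha : 0 ≤ a) (m : ℕ) {x : ℝ} (hx : 0 ≤ x) :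
    1 - g a (m + 1) x ≤ (a * x) ^ (m + 1) / (Nat.factorial (m + 1) : ℝ) := by
  set w : ℝ → ℝ := fun y => (a * y) ^ (m + 1) / (Nat.factorial (m + 1) : ℝ) + g a (m + 1) y
    with hw
  have hderiv : ∀ y : ℝ, HasDerivAt w
      (a * (a * y) ^ m / (Nat.factorial m : ℝ)
        - a * Real.exp (-a * y) * (a * y) ^ m / (Nat.factorial m : ℝ)) y := by
    intro y
    have h1 : HasDerivAt (fun z : ℝ => a * z) a y := by
      simpa using (hasDerivAt_id y).const_mul a
    have hp : HasDerivAt (fun z : ℝ => (a * z) ^ (m + 1))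
        ((m + 1 : ℕ) * (a * y) ^ m * a) y := by
      simpa [Function.comp_def] using (hasDerivAt_pow (m + 1) (a * y)).comp y h1
    have hp2 := (hp.div_const ((Nat.factorial (m + 1) : ℝ))).add (hasDerivAt_g a m y)
    refine hp2.congr_deriv ?_
    have hm : (Nat.factorial (m + 1) : ℝ) = (m + 1) * (Nat.factorial m : ℝ) := by
      rw [Nat.factorial_succ]; push_cast; ring
    have h0 : (Nat.factorial m : ℝ) ≠ 0 := Nat.cast_ne_zero.mpr (Nat.factorial_ne_zero m)
    have h1 : (m + 1 : ℝ) ≠ 0 := by positivity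
    rw [hm]; field_simp; push_cast; ring
  have hmono : MonotoneOn w (Ici 0) := by
    apply monotoneOn_of_deriv_nonneg (convex_Ici 0)
    · exact fun y _ => (hderiv y).continuousAt.continuousWithinAt
    · intro y _
      exact (hderiv y).differentiableAt.differentiableWithinAt
    · intro y hy
      rw [interior_Ici] at hy
      rw [(hderiv y).deriv]
      have hy0 : (0:ℝ) ≤ y := le_of_lt hy
      have he : Real.exp (-a * y) ≤ 1 := by
        rw [Real.exp_le_one_iff]
        nlinarith
      rw [sub_nonneg, show a * (a * y) ^ m / (Nat.factorial m : ℝ)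
          = a * 1 * (a * y) ^ m / (Nat.factorial m : ℝ) by ring]
      gcongr
  have h0 : w 0 = 1 := by
    simp [hw, g_zero, zero_pow (Nat.succ_ne_zero m), mul_zero]
  have := hmono (self_mem_Ici) hx hx
  rw [h0] at this
  have h3 : 1 ≤ (a * x) ^ (m + 1) / (Nat.factorial (m + 1) : ℝ) + g a (m + 1) x := by
    simpa [hw] using this
  linarith


lemma hasDerivAt_gn (a : ℝ) {n : ℕ} (hn : 1 ≤ n) (x : ℝ) :
    HasDerivAt (g a n) (-(f a n x)) x := by
  obtain ⟨m, rfl⟩ : ∃ m, n = m + 1 := ⟨n - 1, (Nat.succ_pred_eq_of_pos hn).symm⟩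
  exact hasDerivAt_g' a m x

lemma g_antitoneOn' {a : ℝ} (ha : 0 ≤ a) {n : ℕ} (hn : 1 ≤ n) : AntitoneOn (g a n) (Ici 0) := by
  obtain ⟨m, rfl⟩ : ∃ m, n = m + 1 := ⟨n - 1, (Nat.succ_pred_eq_of_pos hn).symm⟩
  exact g_antitoneOn ha m

lemma one_sub_g_le' {a : ℝ} (ha : 0 ≤ a) {n : ℕ} (hn : 1 ≤ n) {x : ℝ} (hx : 0 ≤ x) :
    1 - g a n x ≤ (a * x) ^ n / (Nat.factorial n : ℝ) := by
  obtain ⟨m, rfl⟩ : ∃ m, n = m + 1 := ⟨n - 1, (Nat.succ_pred_eq_of_pos hn).symm⟩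
  exact one_sub_g_le ha m hx

lemma continuous_g (a : ℝ) (n : ℕ) : Continuous (g a n) := by
  unfold g
  fun_prop

lemma continuous_f (a : ℝ) (n : ℕ) : Continuous (f a n) := by
  unfold f
  fun_prop

noncomputable def q (L : ℕ) (P : ℝ) (N : ℕ) (x : ℝ) : ℝ :=
  P / (1 + P * x) * (g (L : ℝ) L x) ^ N

noncomputable def h (L : ℕ) (P : ℝ) (N : ℕ) (x : ℝ) : ℝ :=
  Real.log (1 + P * x) * ((N : ℝ) * (g (L : ℝ) L x) ^ (N - 1) * f (L : ℝ) L x)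

lemma exp_neg_le_four {s : ℝ} (hs : 0 < s) : Real.exp (-s) ≤ 4 / s^2 := by
  have h1 : s/2 ≤ Real.exp (s/2) := by linarith [Real.add_one_le_exp (s/2)]
  have h2 : (s/2)^2 ≤ (Real.exp (s/2))^2 := pow_le_pow_left₀ (by positivity) h1 2
  have h3 : Real.exp (s/2) * Real.exp (s/2) = Real.exp s := by
    rw [← Real.exp_add]
    congr 1
    ring
  have h4 : s^2/4 ≤ Real.exp s := by
    rw [← h3]
    nlinarith
  rw [Real.exp_neg]
  have h5 : (0:ℝ) < s^2/4 := by positivity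
  calc (Real.exp s)⁻¹ ≤ (s^2/4)⁻¹ := by
        apply inv_anti₀ h5 h4
    _ = 4/s^2 := by field_simp
  
noncomputable def cc (L : ℕ) : ℝ := Real.exp (-(L:ℝ)) * (L:ℝ)^L / (Nat.factorial L : ℝ)

noncomputable def EE (L : ℕ) : ℝ := ∫ x in Ioi (1:ℝ), 2^L * Real.exp (-((L:ℝ)/2) * x)

lemma cc_pos {L : ℕ} (hL : 1 ≤ L) : 0 < cc L := by
  have : (0:ℝ) < L := by exact_mod_cast hL
  unfold cc
  positivity

lemma EE_nonneg (L : ℕ) : 0 ≤ EE L := by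
  apply setIntegral_nonneg (measurableSet_Ioi : MeasurableSet (Set.Ioi (1:ℝ)))
  intro x _
  positivity

lemma cxL_le {L : ℕ} (hL : 1 ≤ L) {x : ℝ} (hx0 : 0 ≤ x) (hx1 : x ≤ 1) :
    cc L * x ^ L ≤ 1 - g (L:ℝ) L x := by
  have ha : (0:ℝ) ≤ L := Nat.cast_nonneg L
  refine le_trans ?_ (one_sub_g_ge ha L hx0)
  unfold cc
  rw [mul_pow]
  have he : Real.exp (-(L:ℝ)) ≤ Real.exp (-(L:ℝ) * x) := by
    apply Real.exp_le_exp.mpr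
    nlinarith
  have h1 : Real.exp (-(L:ℝ)) * (L:ℝ)^L / (Nat.factorial L : ℝ) * x^L
      = Real.exp (-(L:ℝ)) * ((L:ℝ)^L * x^L) / (Nat.factorial L : ℝ) := by ring
  rw [h1, ← mul_pow]
  gcongr

lemma rho_lt_one {L : ℕ} (hL : 1 ≤ L) : g (L:ℝ) L 1 < 1 := by
  have h := cxL_le hL zero_le_one le_rfl
  have hc := cc_pos hL
  have h1 : cc L * 1 ^ L = cc L := by ring
  rw [h1] at h
  linarith

section main
variable {L : ℕ} (hL : 1 ≤ L) {P : ℝ} (hP : 0 < P) {N : ℕ} (hN : 1 ≤ N)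

include hL hP hN in
lemma q_le_on {x : ℝ} (hx : 0 < x) :
    q L P N x ≤ P * 2 ^ L * Real.exp (-((L : ℝ) / 2) * x) := by
  have ha : (0:ℝ) ≤ L := Nat.cast_nonneg L
  have hx0 : (0:ℝ) ≤ x := hx.le
  have h1 : P / (1 + P * x) ≤ P := by
    rw [div_le_iff₀ (by nlinarith)]
    nlinarith [mul_pos (mul_pos hP hP) hx]
  have h2 : (g (L:ℝ) L x) ^ N ≤ g (L:ℝ) L x := by
    calc (g (L:ℝ) L x) ^ N ≤ (g (L:ℝ) L x) ^ 1 :=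
          pow_le_pow_of_le_one (g_nonneg ha L hx0) (g_le_one ha L hx0) hN
      _ = g (L:ℝ) L x := pow_one _
  calc q L P N x ≤ P * (g (L:ℝ) L x) := by
        unfold q
        apply mul_le_mul h1 h2 (pow_nonneg (g_nonneg ha L hx0) N) hP.le
    _ ≤ P * (2 ^ L * Real.exp (-((L:ℝ) / 2) * x)) :=
        mul_le_mul_of_nonneg_left (g_le_exp ha L hx0) hP.le
    _ = P * 2 ^ L * Real.exp (-((L:ℝ) / 2) * x) := by ring

include hL hP hN in
lemma q_nonneg_on {x : ℝ} (hx : 0 < x) : 0 ≤ q L P N x := by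
  have ha : (0:ℝ) ≤ L := Nat.cast_nonneg L
  unfold q
  have := g_nonneg (a := (L:ℝ)) ha L hx.le
  have : (0:ℝ) ≤ P / (1 + P * x) := by positivity
  positivity

include hL hP hN in
lemma int_q : IntegrableOn (q L P N) (Ioi 0) volume := by
  have ha2 : (0:ℝ) < (L:ℝ)/2 := by have : (1:ℝ) ≤ (L:ℝ) := Nat.one_le_cast.mpr hL; linarith
  apply Integrable.mono' (((exp_neg_integrableOn_Ioi 0 ha2)).const_mul (P * 2 ^ L))
  · apply Measurable.aestronglyMeasurable
    apply Measurable.mul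
    · exact (measurable_const.div ((measurable_const.mul measurable_id).const_add 1))
    · exact ((continuous_g (L:ℝ) L).measurable).pow_const N
  · rw [ae_restrict_iff' measurableSet_Ioi]
    filter_upwards with x hx
    rw [Real.norm_eq_abs, abs_of_nonneg (q_nonneg_on hL hP hN hx)]
    exact q_le_on hL hP hN hx

include hL hP hN in
lemma h_nonneg_on {x : ℝ} (hx : 0 < x) : 0 ≤ h L P N x := by
  have ha : (0:ℝ) ≤ L := Nat.cast_nonneg L
  unfold h
  have h1 : 0 ≤ Real.log (1 + P * x) := by
    apply Real.log_nonneg; nlinarith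
  have h2 := g_nonneg (a := (L:ℝ)) ha L hx.le
  have h3 := f_nonneg (a := (L:ℝ)) ha L hx.le
  positivity

include hL hP hN in
lemma h_le_on {x : ℝ} (hx : 0 < x) :
    h L P N x ≤ 4 * P * N * 2 ^ L * Real.exp (-((L : ℝ) / 4) * x) := by
  have ha : (0:ℝ) ≤ L := Nat.cast_nonneg L
  have ha1 : (1:ℝ) ≤ L := Nat.one_le_cast.mpr hL
  have hx0 : (0:ℝ) ≤ x := hx.le
  have hlog : Real.log (1 + P * x) ≤ P * x := by
    have := Real.log_le_sub_one_of_pos (show (0:ℝ) < 1 + P * x by nlinarith)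
    linarith
  have hxe : x ≤ (4 / (L:ℝ)) * Real.exp ((L:ℝ) / 4 * x) := by
    have h1 : (L:ℝ)/4 * x ≤ Real.exp ((L:ℝ)/4 * x) := by
      linarith [Real.add_one_le_exp ((L:ℝ)/4 * x)]
    have hLne : (L:ℝ) ≠ 0 := by linarith
    rw [← sub_nonneg]
    have hkey : (4/(L:ℝ)) * Real.exp ((L:ℝ)/4 * x) - x
        = (4/(L:ℝ)) * (Real.exp ((L:ℝ)/4 * x) - (L:ℝ)/4 * x) := by
      field_simp
    rw [hkey]
    have : (0:ℝ) ≤ Real.exp ((L:ℝ)/4 * x) - (L:ℝ)/4 * x := by linarith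
    positivity
  have hgpow : (g (L:ℝ) L x) ^ (N - 1) ≤ 1 :=
    pow_le_one₀ (g_nonneg ha L hx0) (g_le_one ha L hx0)
  have hf := f_le_exp ha L hx0
  have hfn := f_nonneg (a := (L:ℝ)) ha L hx0
  have hgn := pow_nonneg (g_nonneg (a := (L:ℝ)) ha L hx0) (N-1)
  have hNn : (0:ℝ) ≤ N := Nat.cast_nonneg N
  calc h L P N x ≤ (P * x) * ((N:ℝ) * 1 * f (L:ℝ) L x) := by
        unfold h
        apply mul_le_mul hlog _ _ (by positivity)
        · apply mul_le_mul (by nlinarith) le_rfl hfn (by positivity)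
        · have hlog0 : 0 ≤ Real.log (1 + P*x) := Real.log_nonneg (by nlinarith)
          positivity
    _ ≤ ((4/(L:ℝ)) * Real.exp ((L:ℝ)/4 * x) * P) * ((N:ℝ) * ((L:ℝ) * 2^L * Real.exp (-((L:ℝ)/2) * x))) := by
        have hx4 := hxe
        apply mul_le_mul
        · calc P * x ≤ P * ((4/(L:ℝ)) * Real.exp ((L:ℝ)/4 * x)) :=
                mul_le_mul_of_nonneg_left hxe hP.le
            _ = (4/(L:ℝ)) * Real.exp ((L:ℝ)/4 * x) * P := by ring
        · rw [mul_one]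
          exact mul_le_mul_of_nonneg_left hf hNn
        · positivity
        · positivity
    _ = 4 * P * N * 2 ^ L * (Real.exp ((L:ℝ)/4 * x) * Real.exp (-((L:ℝ)/2) * x)) := by
        field_simp
    _ = 4 * P * N * 2 ^ L * Real.exp (-((L:ℝ)/4) * x) := by
        rw [← Real.exp_add]
        ring_nf
  
include hL hP hN in
lemma int_h : IntegrableOn (h L P N) (Ioi 0) volume := by
  have ha4 : (0:ℝ) < (L:ℝ)/4 := by have : (1:ℝ) ≤ (L:ℝ) := Nat.one_le_cast.mpr hL; linarith
  apply Integrable.mono' (((exp_neg_integrableOn_Ioi 0 ha4)).const_mul (4 * P * N * 2 ^ L))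
  · apply Measurable.aestronglyMeasurable
    apply Measurable.mul
    · exact Real.measurable_log.comp ((measurable_const.mul measurable_id).const_add 1)
    · apply Measurable.mul
      · exact (measurable_const.mul (((continuous_g (L:ℝ) L).measurable).pow_const (N-1)))
      · exact (continuous_f (L:ℝ) L).measurable
  · rw [ae_restrict_iff' measurableSet_Ioi]
    filter_upwards with x hx
    rw [Real.norm_eq_abs, abs_of_nonneg (h_nonneg_on hL hP hN hx)]
    exact h_le_on hL hP hN hx

include hL hP hN in
lemma int_eq : ∫ x in Ioi (0:ℝ), h L P N x = ∫ x in Ioi (0:ℝ), q L P N x := by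
  have ha : (0:ℝ) ≤ L := Nat.cast_nonneg L
  set u : ℝ → ℝ := fun x => Real.log (1 + P * x) * (g (L:ℝ) L x) ^ N with hu
  have hud : ∀ x : ℝ, 0 ≤ x → HasDerivAt u (q L P N x - h L P N x) x := by
    intro x hx
    have h1x : (0:ℝ) < 1 + P * x := by nlinarith
    have haff : HasDerivAt (fun y : ℝ => 1 + P * y) P x := by
      simpa using ((hasDerivAt_id x).const_mul P).const_add 1
    have hlog : HasDerivAt (fun y => Real.log (1 + P * y)) (P / (1 + P * x)) x := by
      have := (Real.hasDerivAt_log (ne_of_gt h1x)).comp x haff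
      simpa [Function.comp_def, div_eq_inv_mul] using this
    have hpow : HasDerivAt (fun y => (g (L:ℝ) L y) ^ N)
        ((N : ℝ) * (g (L:ℝ) L x) ^ (N - 1) * (-(f (L:ℝ) L x))) x :=
      (hasDerivAt_gn (L:ℝ) hL x).pow N
    have hmul := hlog.mul hpow
    refine hmul.congr_deriv ?_
    unfold q h
    ring
  have hcont : ContinuousWithinAt u (Ici 0) 0 :=
    (hud 0 le_rfl).continuousAt.continuousWithinAt
  have htendaux : Tendsto (fun x : ℝ => x * Real.exp (-((L:ℝ)/2) * x)) atTop (𝓝 0) := by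
    have hb : (0:ℝ) < (L:ℝ)/2 := by
      have : (1:ℝ) ≤ (L:ℝ) := Nat.one_le_cast.mpr hL
      linarith
    have h1 := Real.tendsto_pow_mul_exp_neg_atTop_nhds_zero 1
    have h2 : Tendsto (fun x : ℝ => (L:ℝ)/2 * x) atTop atTop :=
      Tendsto.const_mul_atTop hb tendsto_id
    have h3 := (h1.comp h2).const_mul (2/(L:ℝ))
    have heq : (fun x : ℝ => (2/(L:ℝ)) * (((fun x : ℝ => x ^ 1 * Real.exp (-x)) ∘
        (fun x : ℝ => (L:ℝ)/2 * x)) x)) = fun x : ℝ => x * Real.exp (-((L:ℝ)/2) * x) := by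
      funext x
      simp only [Function.comp_apply, pow_one]
      have hLne : (L:ℝ) ≠ 0 := by positivity
      field_simp
    rw [heq] at h3
    simpa using h3
  have htend : Tendsto u atTop (𝓝 0) := by
    apply squeeze_zero' (g := fun x => (P * 2 ^ L) * (x * Real.exp (-((L:ℝ)/2) * x)))
    · filter_upwards [eventually_ge_atTop (0:ℝ)] with x hx
      have h1 : 0 ≤ Real.log (1 + P * x) := Real.log_nonneg (by nlinarith)
      have h2 : 0 ≤ (g (L:ℝ) L x) ^ N := pow_nonneg (g_nonneg ha L hx) N
      positivity
    · filter_upwards [eventually_ge_atTop (0:ℝ)] with x hx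
      have hlog : Real.log (1 + P * x) ≤ P * x := by
        have := Real.log_le_sub_one_of_pos (show (0:ℝ) < 1 + P * x by nlinarith)
        linarith
      have hgN : (g (L:ℝ) L x) ^ N ≤ g (L:ℝ) L x := by
        calc (g (L:ℝ) L x) ^ N ≤ (g (L:ℝ) L x) ^ 1 :=
              pow_le_pow_of_le_one (g_nonneg ha L hx) (g_le_one ha L hx) hN
          _ = _ := pow_one _
      have hge := g_le_exp ha L hx
      have h1 : 0 ≤ Real.log (1 + P * x) := Real.log_nonneg (by nlinarith)
      calc u x ≤ (P * x) * (g (L:ℝ) L x) := by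
            apply mul_le_mul hlog hgN (pow_nonneg (g_nonneg ha L hx) N) (by positivity)
        _ ≤ (P * x) * (2 ^ L * Real.exp (-((L:ℝ)/2) * x)) := by
            apply mul_le_mul_of_nonneg_left hge (by positivity)
        _ = (P * 2 ^ L) * (x * Real.exp (-((L:ℝ)/2) * x)) := by ring
    · simpa using htendaux.const_mul (P * 2 ^ L)
  have hint : IntegrableOn (fun x => q L P N x - h L P N x) (Ioi 0) volume :=
    (int_q hL hP hN).sub (int_h hL hP hN)
  have hftc := integral_Ioi_of_hasDerivAt_of_tendsto hcont
    (fun x hx => hud x (le_of_lt hx)) hint htend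
  have hu0 : u 0 = 0 := by simp [hu]
  rw [hu0, sub_zero] at hftc
  rw [integral_sub (int_q hL hP hN) (int_h hL hP hN)] at hftc
  linarith

include hL hP hN in
lemma low : (1/(2*(L:ℝ)) * (N:ℝ)^(-(1/(L:ℝ)))) * (P/(1+P) * (1/2))
    ≤ ∫ x in Ioi (0:ℝ), q L P N x := by
  have ha : (0:ℝ) ≤ L := Nat.cast_nonneg L
  have haL1 : (1:ℝ) ≤ L := Nat.one_le_cast.mpr hL
  have hLpos : (0:ℝ) < L := by linarith
  have hN0 : (0:ℝ) < N := by exact_mod_cast hN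
  have hN1 : (1:ℝ) ≤ N := Nat.one_le_cast.mpr hN
  set δ : ℝ := 1/(2*(L:ℝ)) * (N:ℝ)^(-(1/(L:ℝ))) with hδ
  have hr : (0:ℝ) < (N:ℝ)^(-(1/(L:ℝ))) := Real.rpow_pos_of_pos hN0 _
  have hδpos : 0 < δ := by positivity
  have hrle1 : (N:ℝ)^(-(1/(L:ℝ))) ≤ 1 :=
    Real.rpow_le_one_of_one_le_of_nonpos hN1 (neg_nonpos.mpr (by positivity))
  have hδle : δ ≤ 1 := by
    calc δ ≤ 1/(2*(L:ℝ)) * 1 := by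
          apply mul_le_mul_of_nonneg_left hrle1 (by positivity)
      _ ≤ 1 := by
          rw [mul_one]
          rw [div_le_one (by linarith)]
          linarith
  -- key : (L*δ)^L ≤ 1/(2N)
  have hpowδ : ((L:ℝ)*δ)^L ≤ 1/2 * (N:ℝ)⁻¹ := by
    have h1 : (L:ℝ)*δ = (1/2) * (N:ℝ)^(-(1/(L:ℝ))) := by
      rw [hδ]
      field_simp
    have h2 : ((N:ℝ)^(-(1/(L:ℝ))))^L = (N:ℝ)⁻¹ := by
      rw [← Real.rpow_natCast ((N:ℝ)^(-(1/(L:ℝ)))) L, ← Real.rpow_mul hN0.le]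
      rw [show -(1/(L:ℝ)) * L = -1 by field_simp, Real.rpow_neg_one]
    rw [h1, mul_pow, h2]
    apply mul_le_mul_of_nonneg_right _ (by positivity)
    calc ((1:ℝ)/2)^L ≤ (1/2)^1 := by
          apply pow_le_pow_of_le_one (by norm_num) (by norm_num) hL
      _ = 1/2 := pow_one _
  have hgδ : 1 - 1/(2*(N:ℝ)) ≤ g (L:ℝ) L δ := by
    have h1 := one_sub_g_le' ha hL hδpos.le
    have h2 : ((L:ℝ)*δ)^L / (Nat.factorial L : ℝ) ≤ ((L:ℝ)*δ)^L := by
      apply div_le_self (by positivity)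
      exact_mod_cast Nat.one_le_iff_ne_zero.mpr (Nat.factorial_ne_zero L)
    have h3 : 1/2 * (N:ℝ)⁻¹ = 1/(2*(N:ℝ)) := by field_simp
    linarith
  have hg2 : (1:ℝ)/2 ≤ (g (L:ℝ) L δ)^N := by
    have hhalf : 1/(2*(N:ℝ)) ≤ 1/2 := by
      apply div_le_div_of_nonneg_left (by norm_num) (by norm_num)
      linarith
    have hb : (0:ℝ) ≤ 1 - 1/(2*(N:ℝ)) := by linarith
    have h1 : (1 - 1/(2*(N:ℝ)))^N ≤ (g (L:ℝ) L δ)^N := pow_le_pow_left₀ hb hgδ N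
    have h2 : 1 + (N:ℝ) * (-(1/(2*(N:ℝ)))) ≤ (1 + (-(1/(2*(N:ℝ)))))^N := by
      apply one_add_mul_le_pow
      have : (0:ℝ) < 1/(2*(N:ℝ)) := by positivity
      linarith
    have h3 : (N:ℝ) * (1/(2*(N:ℝ))) = 1/2 := by field_simp
    have h4 : 1 + (N:ℝ) * (-(1/(2*(N:ℝ)))) = 1/2 := by rw [mul_neg, h3]; ring
    have h5 : (1 + (-(1/(2*(N:ℝ)))))^N = (1 - 1/(2*(N:ℝ)))^N := by ring_nf
    linarith
  have hpoint : ∀ x ∈ Ioc (0:ℝ) δ, P/(1+P) * (1/2) ≤ q L P N x := by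
    rintro x ⟨hx0, hxδ⟩
    have h1 : P/(1+P) ≤ P/(1+P*x) := by
      apply div_le_div_of_nonneg_left hP.le (by nlinarith)
      nlinarith
    have hgx : g (L:ℝ) L δ ≤ g (L:ℝ) L x :=
      g_antitoneOn' ha hL (mem_Ici.mpr hx0.le) (mem_Ici.mpr hδpos.le) hxδ
    have h2 : (g (L:ℝ) L δ)^N ≤ (g (L:ℝ) L x)^N :=
      pow_le_pow_left₀ (g_nonneg ha L hδpos.le) hgx N
    have h3 : (1:ℝ)/2 ≤ (g (L:ℝ) L x)^N := le_trans hg2 h2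
    have h4 : (0:ℝ) ≤ P/(1+P*x) := by positivity
    calc P/(1+P) * (1/2) ≤ P/(1+P*x) * ((g (L:ℝ) L x)^N) := by
          apply mul_le_mul h1 h3 (by norm_num) h4
      _ = q L P N x := rfl
  have hic : IntegrableOn (q L P N) (Ioc 0 δ) volume :=
    (int_q hL hP hN).mono_set Ioc_subset_Ioi_self
  have hstep1 : δ * (P/(1+P) * (1/2)) ≤ ∫ x in Ioc (0:ℝ) δ, q L P N x := by
    have hconst : ∫ _x in Ioc (0:ℝ) δ, (P/(1+P) * (1/2)) = δ * (P/(1+P) * (1/2)) := by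
      rw [setIntegral_const, Real.volume_real_Ioc_of_le (by linarith), smul_eq_mul]
      ring_nf
    rw [← hconst]
    apply setIntegral_mono_on
      (integrableOn_const measure_Ioc_lt_top.ne) hic measurableSet_Ioc hpoint
  have hstep2 : ∫ x in Ioc (0:ℝ) δ, q L P N x ≤ ∫ x in Ioi (0:ℝ), q L P N x := by
    apply setIntegral_mono_set (int_q hL hP hN)
    · rw [EventuallyLE, ae_restrict_iff' measurableSet_Ioi]
      filter_upwards with x hx
      exact q_nonneg_on hL hP hN hx
    · exact HasSubset.Subset.eventuallyLE Ioc_subset_Ioi_self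
  linarith

include hL hP hN in
lemma up : ∫ x in Ioi (0:ℝ), q L P N x
    ≤ (P + 4*P/(cc L)^2) * (N:ℝ)^(-(1/(L:ℝ)))
      + (P * EE L) * (g (L:ℝ) L 1)^(N-1) := by
  have ha : (0:ℝ) ≤ L := Nat.cast_nonneg L
  have haL1 : (1:ℝ) ≤ L := Nat.one_le_cast.mpr hL
  have hN0 : (0:ℝ) < N := by exact_mod_cast hN
  have hN1 : (1:ℝ) ≤ N := Nat.one_le_cast.mpr hN
  have hc := cc_pos hL
  set δ : ℝ := (N:ℝ)^(-(1/(L:ℝ))) with hδ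
  have hδpos : 0 < δ := Real.rpow_pos_of_pos hN0 _
  have hδ1 : δ ≤ 1 :=
    Real.rpow_le_one_of_one_le_of_nonpos hN1 (neg_nonpos.mpr (by positivity))
  -- split the integral
  have hdisj1 : Disjoint (Set.Ioc (0:ℝ) δ) (Set.Ioi δ) := by
    rw [Set.disjoint_left]
    rintro x ⟨_, h2⟩ h3
    exact absurd h3 (not_lt.mpr h2)
  have hdisj2 : Disjoint (Set.Ioc δ (1:ℝ)) (Set.Ioi 1) := by
    rw [Set.disjoint_left]
    rintro x ⟨_, h2⟩ h3
    exact absurd h3 (not_lt.mpr h2)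
  have hu1 : Set.Ioc (0:ℝ) δ ∪ Set.Ioi δ = Set.Ioi 0 := Ioc_union_Ioi_eq_Ioi hδpos.le
  have hu2 : Set.Ioc δ (1:ℝ) ∪ Set.Ioi 1 = Set.Ioi δ := Ioc_union_Ioi_eq_Ioi hδ1
  have hqint := int_q hL hP hN
  have hi1 : IntegrableOn (q L P N) (Set.Ioc 0 δ) volume :=
    hqint.mono_set Ioc_subset_Ioi_self
  have hi2 : IntegrableOn (q L P N) (Set.Ioc δ 1) volume := by
    apply hqint.mono_set
    intro x hx
    exact lt_trans hδpos hx.1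
  have hi3 : IntegrableOn (q L P N) (Set.Ioi 1) volume := by
    apply hqint.mono_set
    intro x hx
    exact lt_trans one_pos (show (1:ℝ) < x from hx)
  have hiδ : IntegrableOn (q L P N) (Set.Ioi δ) volume :=
    hqint.mono_set (Set.Ioi_subset_Ioi hδpos.le)
  have hsplit : ∫ x in Set.Ioi (0:ℝ), q L P N x
      = ((∫ x in Set.Ioc (0:ℝ) δ, q L P N x) + ∫ x in Set.Ioc δ (1:ℝ), q L P N x)
        + ∫ x in Set.Ioi (1:ℝ), q L P N x := by
    rw [← hu1, setIntegral_union hdisj1 measurableSet_Ioi hi1 hiδ]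
    rw [← hu2, setIntegral_union hdisj2 measurableSet_Ioi hi2 hi3]
    ring
  -- piece 1
  have hp1 : ∫ x in Set.Ioc (0:ℝ) δ, q L P N x ≤ P * δ := by
    have hpt : ∀ x ∈ Set.Ioc (0:ℝ) δ, q L P N x ≤ P := by
      rintro x ⟨hx0, _⟩
      have h1 : P / (1 + P * x) ≤ P := by
        rw [div_le_iff₀ (by nlinarith)]
        nlinarith [mul_pos (mul_pos hP hP) hx0]
      have h2 : (g (L:ℝ) L x) ^ N ≤ 1 :=
        pow_le_one₀ (g_nonneg ha L hx0.le) (g_le_one ha L hx0.le)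
      calc q L P N x ≤ P * 1 :=
            mul_le_mul h1 h2 (pow_nonneg (g_nonneg ha L hx0.le) N) hP.le
        _ = P := mul_one P
    calc ∫ x in Set.Ioc (0:ℝ) δ, q L P N x ≤ ∫ _x in Set.Ioc (0:ℝ) δ, P :=
          setIntegral_mono_on hi1 (integrableOn_const measure_Ioc_lt_top.ne)
            measurableSet_Ioc hpt
      _ = δ * P := by
          rw [setIntegral_const, Real.volume_real_Ioc_of_le (by linarith), smul_eq_mul, sub_zero]
      _ = P * δ := mul_comm δ P
  -- piece 2
  set r : ℝ := -(2*(L:ℝ)) with hr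
  set K : ℝ := 4*P/((cc L)^2 * (N:ℝ)^2) with hK
  have hKpos : 0 < K := by positivity
  have hpt2 : ∀ x ∈ Set.Ioc δ (1:ℝ), q L P N x ≤ K * x ^ r := by
    rintro x ⟨hxδ, hx1⟩
    have hx0 : (0:ℝ) < x := lt_trans hδpos hxδ
    have hxL : 0 < x ^ L := pow_pos hx0 L
    have hgle : g (L:ℝ) L x ≤ Real.exp (-(cc L * x ^ L)) := by
      have h1 := cxL_le hL hx0.le hx1
      have h2 := Real.add_one_le_exp (-(cc L * x ^ L))
      linarith
    have hgN : (g (L:ℝ) L x) ^ N ≤ Real.exp (-((N:ℝ) * (cc L * x ^ L))) := by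
      calc (g (L:ℝ) L x) ^ N ≤ (Real.exp (-(cc L * x ^ L))) ^ N :=
            pow_le_pow_left₀ (g_nonneg ha L hx0.le) hgle N
        _ = Real.exp (-((N:ℝ) * (cc L * x ^ L))) := by
            rw [← Real.exp_nat_mul]; ring_nf
    have hs : 0 < (N:ℝ) * (cc L * x ^ L) := by positivity
    have hexp := exp_neg_le_four hs
    have hqP : q L P N x ≤ P * ((g (L:ℝ) L x) ^ N) := by
      unfold q
      apply mul_le_mul_of_nonneg_right _ (pow_nonneg (g_nonneg ha L hx0.le) N)
      rw [div_le_iff₀ (by nlinarith)]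
      nlinarith [mul_pos (mul_pos hP hP) hx0]
    have hrw : x ^ r = ((x ^ L) ^ 2)⁻¹ := by
      rw [hr, show -(2*(L:ℝ)) = -(((2*L : ℕ) : ℝ)) by push_cast; ring]
      rw [Real.rpow_neg hx0.le, Real.rpow_natCast, pow_mul']
    calc q L P N x ≤ P * Real.exp (-((N:ℝ) * (cc L * x ^ L))) :=
          le_trans hqP (mul_le_mul_of_nonneg_left hgN hP.le)
      _ ≤ P * (4 / ((N:ℝ) * (cc L * x ^ L))^2) := mul_le_mul_of_nonneg_left hexp hP.le
      _ = K * ((x ^ L) ^ 2)⁻¹ := by rw [hK]; field_simp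
      _ = K * x ^ r := by rw [hrw]
  have hint2 : IntegrableOn (fun x => K * x ^ r) (Set.Ioc δ (1:ℝ)) volume := by
    have hcontKr : ContinuousOn (fun x : ℝ => K * x ^ r) (Set.Icc δ 1) := by
      apply ContinuousOn.mul continuousOn_const
      apply ContinuousOn.rpow_const continuousOn_id
      intro x hx
      exact Or.inl (ne_of_gt (lt_of_lt_of_le hδpos hx.1))
    exact (hcontKr.integrableOn_compact isCompact_Icc).mono_set Ioc_subset_Icc_self
  have hrne : r ≠ -1 := by
    rw [hr]
    intro hcon
    have : (2:ℝ)*(L:ℝ) = 1 := by linarith [neg_injective hcon]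
    linarith
  have h0nm : (0:ℝ) ∉ Set.uIcc δ 1 := by
    rw [Set.uIcc_of_le hδ1, Set.mem_Icc]
    push_neg
    intro h1
    linarith
  have hJ : ∫ x in Set.Ioc δ (1:ℝ), x ^ r = (1 - δ ^ (r+1))/(r+1) := by
    rw [← intervalIntegral.integral_of_le hδ1, integral_rpow (Or.inr ⟨hrne, h0nm⟩),
      Real.one_rpow]
  have ht1 : 1 ≤ δ ^ (r+1) := by
    apply Real.one_le_rpow_of_pos_of_le_one_of_nonpos hδpos hδ1
    rw [hr]; linarith
  have hbound : (1 - δ^(r+1))/(r+1) ≤ δ^(r+1) := by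
    have hr1 : r + 1 = -(2*(L:ℝ) - 1) := by rw [hr]; ring
    have h2L1 : (1:ℝ) ≤ 2*(L:ℝ) - 1 := by linarith
    have heq : (1 - δ^(r+1))/(r+1) = (δ^(r+1) - 1)/(2*(L:ℝ)-1) := by
      rw [hr1]
      rw [div_neg]
      field_simp
      ring
    rw [heq, div_le_iff₀ (by linarith)]
    nlinarith
  have hδr : δ ^ (r+1) = (N:ℝ) ^ (-(1/(L:ℝ)) * (r+1)) := by
    rw [hδ, ← Real.rpow_mul hN0.le]
  have hexp2 : -(1/(L:ℝ)) * (r+1) = ((2:ℕ):ℝ) + (-(1/(L:ℝ))) := by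
    rw [hr]
    have hLne : (L:ℝ) ≠ 0 := by linarith
    push_cast
    field_simp
    ring
  have hKδ : K * δ ^ (r+1) = (4*P/(cc L)^2) * (N:ℝ)^(-(1/(L:ℝ))) := by
    rw [hδr, hexp2, Real.rpow_add hN0, Real.rpow_natCast, hK]
    have hN2 : ((N:ℝ)^(2:ℕ)) ≠ 0 := by positivity
    have hc2 : (cc L)^2 ≠ 0 := by positivity
    field_simp
  have hp2 : ∫ x in Set.Ioc δ (1:ℝ), q L P N x ≤ (4*P/(cc L)^2) * (N:ℝ)^(-(1/(L:ℝ))) := by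
    calc ∫ x in Set.Ioc δ (1:ℝ), q L P N x
        ≤ ∫ x in Set.Ioc δ (1:ℝ), K * x ^ r :=
          setIntegral_mono_on hi2 hint2 measurableSet_Ioc hpt2
      _ = K * ∫ x in Set.Ioc δ (1:ℝ), x ^ r := by rw [integral_const_mul]
      _ = K * ((1 - δ^(r+1))/(r+1)) := by rw [hJ]
      _ ≤ K * δ^(r+1) := mul_le_mul_of_nonneg_left hbound hKpos.le
      _ = _ := hKδ
  -- piece 3
  set ρ : ℝ := g (L:ℝ) L 1 with hρ
  have hρ0 : 0 ≤ ρ := g_nonneg ha L zero_le_one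
  have hL2 : (0:ℝ) < (L:ℝ)/2 := by linarith
  have hpt3 : ∀ x ∈ Set.Ioi (1:ℝ), q L P N x
      ≤ (P * ρ^(N-1)) * (2^L * Real.exp (-((L:ℝ)/2) * x)) := by
    intro x hx
    have hx1 : (1:ℝ) < x := hx
    have hx0 : (0:ℝ) < x := lt_trans one_pos hx1
    have hgρ : g (L:ℝ) L x ≤ ρ :=
      g_antitoneOn' ha hL (Set.mem_Ici.mpr zero_le_one) (Set.mem_Ici.mpr hx0.le) hx1.le
    have h1 : (g (L:ℝ) L x)^(N-1) ≤ ρ^(N-1) :=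
      pow_le_pow_left₀ (g_nonneg ha L hx0.le) hgρ _
    have h2 : g (L:ℝ) L x ≤ 2^L * Real.exp (-((L:ℝ)/2) * x) := g_le_exp ha L hx0.le
    have hqP : q L P N x ≤ P * ((g (L:ℝ) L x) ^ N) := by
      unfold q
      apply mul_le_mul_of_nonneg_right _ (pow_nonneg (g_nonneg ha L hx0.le) N)
      rw [div_le_iff₀ (by nlinarith)]
      nlinarith [mul_pos (mul_pos hP hP) hx0]
    have hsplitN : (g (L:ℝ) L x)^N = (g (L:ℝ) L x)^(N-1) * g (L:ℝ) L x := by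
      conv_lhs => rw [show N = (N-1)+1 from (Nat.succ_pred_eq_of_pos hN).symm]
      rw [pow_succ]
    calc q L P N x ≤ P * ((g (L:ℝ) L x)^N) := hqP
      _ = P * ((g (L:ℝ) L x)^(N-1) * g (L:ℝ) L x) := by rw [hsplitN]
      _ ≤ P * (ρ^(N-1) * (2^L * Real.exp (-((L:ℝ)/2) * x))) := by
          apply mul_le_mul_of_nonneg_left _ hP.le
          apply mul_le_mul h1 h2 (g_nonneg ha L hx0.le) (pow_nonneg hρ0 _)
      _ = (P * ρ^(N-1)) * (2^L * Real.exp (-((L:ℝ)/2) * x)) := by ring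
  have hintE : IntegrableOn (fun x => (2:ℝ)^L * Real.exp (-((L:ℝ)/2) * x)) (Set.Ioi 1) volume :=
    (exp_neg_integrableOn_Ioi 1 hL2).const_mul _
  have hp3 : ∫ x in Set.Ioi (1:ℝ), q L P N x ≤ (P * EE L) * ρ^(N-1) := by
    calc ∫ x in Set.Ioi (1:ℝ), q L P N x
        ≤ ∫ x in Set.Ioi (1:ℝ), (P * ρ^(N-1)) * ((2:ℝ)^L * Real.exp (-((L:ℝ)/2) * x)) :=
          setIntegral_mono_on hi3 (hintE.const_mul _) measurableSet_Ioi hpt3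
      _ = (P * ρ^(N-1)) * EE L := by rw [integral_const_mul]; rfl
      _ = (P * EE L) * ρ^(N-1) := by ring
  rw [hsplit]
  have hfin : (P + 4*P/(cc L)^2) * ((N:ℝ)^(-(1/(L:ℝ)))) = P * δ + (4*P/(cc L)^2) * ((N:ℝ)^(-(1/(L:ℝ)))) := by
    rw [← hδ]; ring
  linarith

end main
end WorstUser

open WorstUser

/-- Fix `L ≥ 1` and `P > 0`; let `F(x) = 1 − e^{−Lx} Σ_{k<L} (Lx)^k/k!` with density
`f(x) = L e^{−Lx}(Lx)^{L−1}/(L−1)!`. The total throughput of the worst-user scheduler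
with `L` antennas, `N ∫_0^∞ log(1+Px) · N(1−F(x))^{N−1} f(x) dx`, is `Θ(N^{(L−1)/L})`. -/
theorem worst_user_multiantenna_throughput_theta (L : ℕ) (hL : 1 ≤ L) (P : ℝ) (hP : 0 < P) :
    ∃ c₁ c₂ : ℝ, ∃ N₀ : ℕ, 0 < c₁ ∧ c₁ ≤ c₂ ∧
      ∀ N : ℕ, N₀ ≤ N →
        c₁ * (N : ℝ) ^ (((L : ℝ) - 1) / L) ≤
            ((N : ℝ) * ∫ x in Ioi (0 : ℝ), Real.log (1 + P * x) *
              ((N : ℝ) *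
                (Real.exp (-(L : ℝ) * x) *
                  ∑ k ∈ Finset.range L, ((L : ℝ) * x) ^ k / (Nat.factorial k : ℝ)) ^ (N - 1) *
                ((L : ℝ) * Real.exp (-(L : ℝ) * x) * ((L : ℝ) * x) ^ (L - 1) /
                  (Nat.factorial (L - 1) : ℝ)))) ∧
          ((N : ℝ) * ∫ x in Ioi (0 : ℝ), Real.log (1 + P * x) *
              ((N : ℝ) *
                (Real.exp (-(L : ℝ) * x) *
                  ∑ k ∈ Finset.range L, ((L : ℝ) * x) ^ k / (Nat.factorial k : ℝ)) ^ (N - 1) *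
                ((L : ℝ) * Real.exp (-(L : ℝ) * x) * ((L : ℝ) * x) ^ (L - 1) /
                  (Nat.factorial (L - 1) : ℝ)))) ≤
            c₂ * (N : ℝ) ^ (((L : ℝ) - 1) / L) := by
  have haL1 : (1:ℝ) ≤ L := Nat.one_le_cast.mpr hL
  have hc := cc_pos hL
  have hEE := EE_nonneg L
  set ρ : ℝ := g (L:ℝ) L 1 with hρdef
  have hρ0 : 0 ≤ ρ := g_nonneg (Nat.cast_nonneg L) L zero_le_one
  have hρ1 : ρ < 1 := rho_lt_one hL
  -- eventual smallness of the geometric tail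
  have hsum : Summable (fun m : ℕ => ((m:ℝ) + 1) * ρ^m) := by
    have h1 : Summable (fun m : ℕ => (m:ℝ) * ρ^m) := by
      have := summable_pow_mul_geometric_of_norm_lt_one (R := ℝ) 1
        (r := ρ) (by rwa [Real.norm_eq_abs, abs_of_nonneg hρ0])
      simpa using this
    have h2 : Summable (fun m : ℕ => ρ^m) := summable_geometric_of_lt_one hρ0 hρ1
    have h3 := h1.add h2
    apply h3.congr
    intro m
    ring
  have htend : Tendsto (fun m : ℕ => (P * EE L) * (((m:ℝ)+1) * ρ^m)) atTop (𝓝 0) := by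
    have := (hsum.tendsto_atTop_zero).const_mul (P * EE L)
    simpa using this
  obtain ⟨M, hM⟩ := eventually_atTop.mp (htend.eventually_lt_const one_pos)
  refine ⟨1/(2*(L:ℝ)) * (P/(1+P) * (1/2)), P + 4*P/(cc L)^2 + 1, M + 1, ?_, ?_, ?_⟩
  · positivity
  · have h1 : P/(1+P) ≤ P := by
      apply div_le_self hP.le
      linarith
    have h2 : 1/(2*(L:ℝ)) ≤ 1 := by
      rw [div_le_one (by linarith)]
      linarith
    have h3 : (0:ℝ) ≤ 4*P/(cc L)^2 := by positivity
    have h4 : (0:ℝ) ≤ P/(1+P) := by positivity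
    nlinarith
  · intro N hNge
    have hN : 1 ≤ N := le_trans (Nat.le_add_left 1 M) hNge
    have hN1 : (1:ℝ) ≤ N := Nat.one_le_cast.mpr hN
    have hNpos : (0:ℝ) < N := by linarith
    have hiact : ∫ x in Ioi (0 : ℝ), Real.log (1 + P * x) *
        ((N : ℝ) * (Real.exp (-(L : ℝ) * x) *
            ∑ k ∈ Finset.range L, ((L : ℝ) * x) ^ k / (Nat.factorial k : ℝ)) ^ (N - 1) *
          ((L : ℝ) * Real.exp (-(L : ℝ) * x) * ((L : ℝ) * x) ^ (L - 1) /
            (Nat.factorial (L - 1) : ℝ))) = ∫ x in Set.Ioi (0:ℝ), h L P N x := rfl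
    rw [hiact, int_eq hL hP hN]
    have hrpow : (N:ℝ)^(((L:ℝ)-1)/L) = (N:ℝ) * (N:ℝ)^(-(1/(L:ℝ))) := by
      rw [show ((L:ℝ)-1)/(L:ℝ) = 1 + (-(1/(L:ℝ))) by field_simp; ring]
      rw [Real.rpow_add hNpos, Real.rpow_one]
    have hone_le : (1:ℝ) ≤ (N:ℝ)^(((L:ℝ)-1)/L) := by
      apply Real.one_le_rpow hN1
      have : (0:ℝ) < (L:ℝ) := by linarith
      apply div_nonneg (by linarith) this.le
    constructor
    · -- lower bound
      have hlow := low hL hP hN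
      calc (1/(2*(L:ℝ)) * (P/(1+P) * (1/2))) * (N:ℝ)^(((L:ℝ)-1)/L)
          = (N:ℝ) * ((1/(2*(L:ℝ)) * (N:ℝ)^(-(1/(L:ℝ)))) * (P/(1+P) * (1/2))) := by
            rw [hrpow]; ring
        _ ≤ (N:ℝ) * ∫ x in Set.Ioi (0:ℝ), q L P N x :=
            mul_le_mul_of_nonneg_left hlow hNpos.le
    · -- upper bound
      have hup := up hL hP hN
      have htail : (N:ℝ) * ((P * EE L) * ρ^(N-1)) ≤ 1 := by
        have hMN : M ≤ N - 1 := by omega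
        have := hM (N-1) hMN
        have hcast : ((N - 1 : ℕ):ℝ) + 1 = (N:ℝ) := by
          have h5 : (N - 1) + 1 = N := Nat.succ_pred_eq_of_pos hN
          exact_mod_cast congrArg (Nat.cast : ℕ → ℝ) h5
        rw [hcast] at this
        linarith [this]
      calc (N:ℝ) * ∫ x in Set.Ioi (0:ℝ), q L P N x
          ≤ (N:ℝ) * ((P + 4*P/(cc L)^2) * (N:ℝ)^(-(1/(L:ℝ))) + (P * EE L) * ρ^(N-1)) :=
            mul_le_mul_of_nonneg_left hup hNpos.le
        _ = (P + 4*P/(cc L)^2) * ((N:ℝ) * (N:ℝ)^(-(1/(L:ℝ)))) + (N:ℝ) * ((P * EE L) * ρ^(N-1)) := by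
            ring
        _ ≤ (P + 4*P/(cc L)^2) * (N:ℝ)^(((L:ℝ)-1)/L) + 1 := by
            rw [hrpow]
            linarith
        _ ≤ (P + 4*P/(cc L)^2) * (N:ℝ)^(((L:ℝ)-1)/L) + 1 * (N:ℝ)^(((L:ℝ)-1)/L) := by
            have hx : (0:ℝ) ≤ P + 4*P/(cc L)^2 := by positivity
            nlinarith
        _ = (P + 4*P/(cc L)^2 + 1) * (N:ℝ)^(((L:ℝ)-1)/L) := by ring
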